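/- Let n ≥ 2, α > 1, q > 2̃_α, and suppose ψ : (0,∞) → (0,∞) is C¹, nondecreasing, with ψ'(r)/ψ(r) ≥ (α-ε)/r for all r ≥ r_ε, where ε > 0 is so small that (α-ε)(n-1)+1 > 2q/(q-1). Then there exist A, B > 0 such that w(r) = A(B + r²)^{-1/(q-1)} satisfies -w''(r) - (n-1)(ψ'(r)/ψ(r)) w'(r) ≥ w(r)^q for all r > 0. -/

import Mathlib

open Set

/-- Existence of radial supersolutions for `q > 2̃_α` (core computation of Theorem 1.3):
if `ψ` is `C¹`, nondecreasing, with `ψ'/ψ ≥ (α-ε)/r` for `r ≥ r_ε`, and `ε` is small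
enough that `(α-ε)(n-1)+1 > 2q/(q-1)`, then some `w(r) = A(B+r²)^{-1/(q-1)}` satisfies
`-w'' - (n-1)(ψ'/ψ) w' ≥ w^q` on `(0,∞)`. -/
theorem supersolution_exists (n : ℕ) (hn : 2 ≤ n) (α : ℝ) (hα : 1 < α)
    (q : ℝ) (hq : (α * (n - 1) + 1) / (α * (n - 1) - 1) < q)
    (ψ : ℝ → ℝ)
    (hpos : ∀ r > (0:ℝ), 0 < ψ r)
    (hdiff : ∀ r > (0:ℝ), DifferentiableAt ℝ ψ r)
    (hmono : MonotoneOn ψ (Ioi 0))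
    (ε rε : ℝ) (hε : 0 < ε) (hrε : 0 < rε)
    (hεsmall : 2 * q / (q - 1) < (α - ε) * (n - 1) + 1)
    (hlower : ∀ r ≥ rε, (α - ε) / r ≤ deriv ψ r / ψ r) :
    ∃ A > (0:ℝ), ∃ B > (0:ℝ),
      ∀ r > (0:ℝ),
        (fun w : ℝ → ℝ =>
          w r ^ q ≤ -deriv (deriv w) r - (n - 1 : ℝ) * (deriv ψ r / ψ r) * deriv w r)
        (fun r => A * (B + r ^ 2) ^ (-(1 / (q - 1)))) := by
  have hn1 : (1:ℝ) ≤ (n:ℝ) - 1 := by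
    have : (2:ℝ) ≤ (n:ℝ) := by exact_mod_cast hn
    linarith
  have hX : 1 < α * ((n:ℝ) - 1) := by nlinarith
  have hq1 : 1 < q := by
    have h0 : 0 < α * ((n:ℝ)-1) - 1 := by linarith
    have h1 : 1 < (α * ((n:ℝ)-1) + 1) / (α * ((n:ℝ)-1) - 1) := by
      rw [lt_div_iff₀ h0]; linarith
    linarith
  have hq1' : 0 < q - 1 := by linarith
  obtain ⟨m, hm⟩ : ∃ m : ℝ, m = 1 / (q - 1) := ⟨_, rfl⟩
  have hm0 : 0 < m := by rw [hm]; positivity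
  have hmq : m * (q - 1) = 1 := by rw [hm]; field_simp
  have h2m : 2 * q / (q-1) = 2*(m+1) := by rw [hm]; field_simp; ring
  have hαε : 0 < α - ε := by
    have h2 : (2:ℝ) < 2*q/(q-1) := by
      rw [lt_div_iff₀ hq1']; linarith
    nlinarith [hεsmall]
  have hC₁0 : 0 < 2*m*((α-ε)*((n:ℝ)-1) + 1 - 2*(m+1)) := by
    have h3 : 2*(m+1) < (α-ε)*((n:ℝ)-1)+1 := by rw [← h2m]; exact hεsmall
    have h4 : 0 < (α-ε)*((n:ℝ)-1)+1 - 2*(m+1) := by linarith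
    positivity
  obtain ⟨c, hcdef⟩ : ∃ c : ℝ, c = min (2*m*((α-ε)*((n:ℝ)-1) + 1 - 2*(m+1))) m := ⟨_, rfl⟩
  have hc : 0 < c := by rw [hcdef]; exact lt_min hC₁0 hm0
  obtain ⟨A, hAdef⟩ : ∃ A : ℝ, A = c ^ m := ⟨_, rfl⟩
  have hA : 0 < A := by rw [hAdef]; exact Real.rpow_pos_of_pos hc m
  obtain ⟨B, hBdef⟩ : ∃ B : ℝ, B = 4*(m+1)*rε^2 := ⟨_, rfl⟩
  have hB : 0 < B := by rw [hBdef]; positivity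
  refine ⟨A, hA, B, hB, ?_⟩
  intro r hr
  show (A * (B + r ^ 2) ^ (-(1 / (q - 1)))) ^ q ≤
      -deriv (deriv (fun r => A * (B + r ^ 2) ^ (-(1 / (q - 1))))) r
      - ((n:ℝ) - 1) * (deriv ψ r / ψ r) * deriv (fun r => A * (B + r ^ 2) ^ (-(1 / (q - 1)))) r
  have hexp : (-(1 / (q - 1)) : ℝ) = -m := by rw [hm]
  simp only [hexp]
  have hs : 0 < B + r^2 := by positivity
  -- first derivative everywhere
  have hdw : ∀ t : ℝ, HasDerivAt (fun t => A * (B + t^2) ^ (-m))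
      (-2*A*m*(t*(B+t^2)^(-m-1))) t := by
    intro t
    have hst : (0:ℝ) < B + t^2 := by positivity
    have h1 : HasDerivAt (fun t : ℝ => B + t^2) (2*t) t := by
      simpa using ((hasDerivAt_pow 2 t).const_add B)
    have h2 := (h1.rpow_const (p := -m) (Or.inl hst.ne'))
    have h3 := h2.const_mul A
    refine h3.congr_deriv ?_
    ring
  have hdw' : deriv (fun t => A * (B + t^2) ^ (-m))
      = fun t => -2*A*m*(t*(B+t^2)^(-m-1)) := funext fun t => (hdw t).deriv
  have hdwr : deriv (fun t => A * (B + t^2) ^ (-m)) r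
      = -2*A*m*(r*(B+r^2)^(-m-1)) := (hdw r).deriv
  -- second derivative at r
  have hdd : HasDerivAt (fun t => -2*A*m*(t*(B+t^2)^(-m-1)))
      (-2*A*m*((B+r^2)^(-m-1) + r*(2*r*(-m-1)*(B+r^2)^(-m-1-1)))) r := by
    have h1 : HasDerivAt (fun t : ℝ => B + t^2) (2*r) r := by
      simpa using ((hasDerivAt_pow 2 r).const_add B)
    have hg := h1.rpow_const (p := -m-1) (Or.inl hs.ne')
    have hmul := (hasDerivAt_id' r).mul hg
    have h3 := hmul.const_mul (-2*A*m)
    refine h3.congr_deriv ?_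
    ring
  -- deriv ψ nonneg
  have hderivψ : 0 ≤ deriv ψ r := by
    have hd := (hdiff r hr).hasDerivAt
    have htend : Filter.Tendsto (slope ψ r) (nhdsWithin r (Ioi r)) (nhds (deriv ψ r)) := by
      refine (hasDerivAt_iff_tendsto_slope.mp hd).mono_left (nhdsWithin_mono r ?_)
      intro y hy
      simp only [mem_compl_iff, mem_singleton_iff]
      exact ne_of_gt hy
    refine ge_of_tendsto htend (eventually_nhdsWithin_of_forall fun y hy => ?_)
    rw [slope_def_field]
    have hy0 : (0:ℝ) < y := lt_trans hr hy
    have hmle := hmono hr hy0 (le_of_lt hy)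
    have hyr : 0 < y - r := by simp only [mem_Ioi] at hy; linarith
    exact div_nonneg (by linarith) hyr.le
  have hL0 : 0 ≤ deriv ψ r / ψ r := div_nonneg hderivψ (hpos r hr).le
  -- core scalar inequality
  have P : c * (B + r^2) ≤ 2*m*(B+r^2) - 4*m*(m+1)*r^2
      + 2*m*((n:ℝ)-1)*((deriv ψ r / ψ r)*r)*(B+r^2) := by
    rcases le_or_gt rε r with hge | hlt
    · have hLr : α - ε ≤ (deriv ψ r / ψ r) * r := by
        have h5 := hlower r hge
        rw [div_le_iff₀ (lt_of_lt_of_le hrε hge)] at h5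
        linarith [h5]
      have t1 : 2*m*((n:ℝ)-1)*((α-ε)*(B+r^2))
          ≤ 2*m*((n:ℝ)-1)*(((deriv ψ r / ψ r)*r)*(B+r^2)) := by
        have hNn0 : (0:ℝ) ≤ (n:ℝ)-1 := by linarith
        apply mul_le_mul_of_nonneg_left _ (by positivity)
        exact mul_le_mul_of_nonneg_right hLr hs.le
      have t2 : c*(B+r^2) ≤ (2*m*((α-ε)*((n:ℝ)-1) + 1 - 2*(m+1)))*(B+r^2) := by
        refine mul_le_mul_of_nonneg_right ?_ hs.le
        rw [hcdef]; exact min_le_left _ _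
      have t3 : 4*m*(m+1)*r^2 + 4*m*(m+1)*B = 4*m*(m+1)*(B+r^2) := by ring
      have t4 : 0 ≤ 4*m*(m+1)*B := by positivity
      linarith [t1, t2, t3, t4]
    · have t0 : 0 ≤ 2*m*((n:ℝ)-1)*((deriv ψ r / ψ r)*r)*(B+r^2) := by
        have hLr0 : 0 ≤ (deriv ψ r / ψ r) * r := mul_nonneg hL0 hr.le
        have hNn0 : (0:ℝ) ≤ (n:ℝ)-1 := by linarith
        have h6 : 0 ≤ 2*m*((n:ℝ)-1) := by positivity
        exact mul_nonneg (mul_nonneg h6 hLr0) hs.le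
      have t2 : c*(B+r^2) ≤ m*(B+r^2) := by
        refine mul_le_mul_of_nonneg_right ?_ hs.le
        rw [hcdef]; exact min_le_right _ _
      have h7 : r^2 ≤ rε^2 := by nlinarith
      have t5 : 4*m*(m+1)*r^2 ≤ 4*m*(m+1)*rε^2 :=
        mul_le_mul_of_nonneg_left h7 (by positivity)
      have t6 : m*(B+r^2) = 4*m*(m+1)*rε^2 + m*r^2 := by rw [hBdef]; ring
      have t7 : 0 ≤ m*r^2 := by positivity
      linarith [t0, t2, t5, t6, t7]
  -- from P to the T/U form
  have hUs : (B+r^2) ^ (-m-1-1) * (B+r^2) = (B+r^2) ^ (-m-1) := by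
    rw [← Real.rpow_add_one hs.ne' (-m-1-1)]
    congr 1; ring
  have hU0 : 0 < (B+r^2) ^ (-m-1-1) := Real.rpow_pos_of_pos hs _
  have H2 : A*c*((B+r^2) ^ (-m-1)) ≤ 2*m*(A*((B+r^2) ^ (-m-1)))
      - 4*m*(m+1)*A*r^2*((B+r^2) ^ (-m-1-1))
      + 2*m*((n:ℝ)-1)*((deriv ψ r / ψ r)*r)*(A*((B+r^2) ^ (-m-1))) := by
    have H := mul_le_mul_of_nonneg_left P
      (by positivity : (0:ℝ) ≤ A*((B+r^2) ^ (-m-1-1)))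
    calc A*c*((B+r^2) ^ (-m-1)) = A*((B+r^2) ^ (-m-1-1))*(c*(B+r^2)) := by
          rw [← hUs]; ring
    _ ≤ A*((B+r^2) ^ (-m-1-1))*(2*m*(B+r^2) - 4*m*(m+1)*r^2
          + 2*m*((n:ℝ)-1)*((deriv ψ r / ψ r)*r)*(B+r^2)) := H
    _ = 2*m*(A*((B+r^2) ^ (-m-1-1)*(B+r^2))) - 4*m*(m+1)*A*r^2*((B+r^2) ^ (-m-1-1))
        + 2*m*((n:ℝ)-1)*((deriv ψ r / ψ r)*r)*(A*((B+r^2) ^ (-m-1-1)*(B+r^2))) := by ring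
    _ = _ := by rw [hUs]
  -- compute LHS
  have hLHS : (A * (B + r^2) ^ (-m)) ^ q = A*c*((B+r^2) ^ (-m-1)) := by
    rw [Real.mul_rpow hA.le (Real.rpow_nonneg hs.le _), ← Real.rpow_mul hs.le]
    have e1 : -m*q = -m-1 := by
      have h9 : m*q - m = 1 := by linarith [hmq]
      linarith
    rw [e1]
    have hAq1 : A^(q-1) = c := by
      rw [hAdef, ← Real.rpow_mul hc.le, hmq, Real.rpow_one]
    have h8 : A^q = A^(1+(q-1)) := by congr 1; ring
    rw [h8, Real.rpow_add hA, Real.rpow_one, hAq1]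
  rw [hdwr, hdw', hdd.deriv, hLHS]
  linarith [H2]
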